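/- Let V be a real vector space with a symmetric bilinear form B, and let β ∈ V satisfy B(β,β) > 0 and assume B(v,v) ≤ 0 for every v with B(β,v) = 0. Let β_0, β_1, …, β_r ∈ V with r ≥ 1 and β = β_0 + β_1 + ⋯ + β_r, and let c > 0 be a real number such that B(β, β_k) ≥ c and B(β, β − β_k) ≥ c for every k = 0, …, r. Then B(β,β) − ∑_{k=0}^{r} B(β_k, β_k) ≥ c. -/

import Mathlib

theorem stmt_3 (V : Type*) [AddCommGroup V] [Module ℝ V]
    (B : V →ₗ[ℝ] V →ₗ[ℝ] ℝ) (hsymm : ∀ u v : V, B u v = B v u)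
    (β : V) (hβ : 0 < B β β)
    (hneg : ∀ v : V, B β v = 0 → B v v ≤ 0)
    (r : ℕ) (hr : 1 ≤ r) (βk : Fin (r + 1) → V)
    (hsum : β = ∑ k, βk k)
    (c : ℝ) (hc : 0 < c)
    (h1 : ∀ k, c ≤ B β (βk k)) (h2 : ∀ k, c ≤ B β (β - βk k)) :
    B β β - ∑ k, B (βk k) (βk k) ≥ c := by
  set b := B β β with hb
  have hbne : b ≠ 0 := ne_of_gt hβ
  set a : Fin (r + 1) → ℝ := fun k => B β (βk k) with ha
  have hsuma : ∑ k, a k = b := by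
    simp only [ha, hb, ← map_sum, ← hsum]
  -- Hodge index bound
  have key : ∀ k, B (βk k) (βk k) ≤ (a k) ^ 2 / b := by
    intro k
    have hv : B β (βk k - (a k / b) • β) = 0 := by
      simp only [map_sub, map_smul, smul_eq_mul, ← ha, ← hb]
      field_simp
      simp [ha]
    have hneg' := hneg _ hv
    have hexp : B (βk k - (a k / b) • β) (βk k - (a k / b) • β)
        = B (βk k) (βk k) - (a k) ^ 2 / b := by
      simp only [map_sub, map_smul, LinearMap.sub_apply, LinearMap.smul_apply,
        smul_eq_mul, hsymm (βk k) β, ← ha, ← hb]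
      field_simp
      ring
    rw [hexp] at hneg'
    linarith
  have hsumle : ∑ k, B (βk k) (βk k) ≤ ∑ k, (a k) ^ 2 / b :=
    Finset.sum_le_sum fun k _ => key k
  -- each term a k * (b - a k) / b ≥ c / 2
  have hterm : ∀ k : Fin (r + 1), c / 2 ≤ a k * (b - a k) / b := by
    intro k
    have h1' : c ≤ a k := h1 k
    have h2' : c ≤ b - a k := by
      have := h2 k
      simp only [map_sub, ← ha, ← hb] at this
      linarith
    rw [div_le_div_iff₀ (by norm_num) hβ]
    nlinarith
  have hsum2 : ∑ k, (c / 2) ≤ ∑ k, a k * (b - a k) / b :=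
    Finset.sum_le_sum fun k _ => hterm k
  have hcard : ∑ k : Fin (r + 1), (c / 2) = (r + 1) * (c / 2) := by
    simp [Finset.sum_const, mul_comm]
  have hrc : c ≤ (r + 1) * (c / 2) := by
    have : (2 : ℝ) ≤ (r : ℝ) + 1 := by
      have : (1 : ℝ) ≤ (r : ℝ) := by exact_mod_cast hr
      linarith
    nlinarith
  have hident : ∑ k, a k * (b - a k) / b = b - ∑ k, (a k) ^ 2 / b := by
    rw [eq_sub_iff_add_eq, ← Finset.sum_add_distrib]
    have : ∀ k ∈ Finset.univ, a k * (b - a k) / b + (a k) ^ 2 / b = a k := by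
      intro k _
      field_simp
      ring
    rw [Finset.sum_congr rfl this, hsuma]
  have : c ≤ b - ∑ k, (a k) ^ 2 / b := by
    rw [← hident]
    calc c ≤ (r + 1) * (c / 2) := hrc
    _ = ∑ k : Fin (r + 1), (c / 2) := hcard.symm
    _ ≤ _ := hsum2
  linarith
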